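/- Consider the map Q : ℝ^{2n} → ℝ⁴ given by Q(x, r) = (∑ᵢ xᵢ − 2π, ∑ᵢ rᵢ r_{i+1} sin xᵢ − n sin(2π/n), ∑ᵢ rᵢ cos(∑_{k<i} x_k), ∑ᵢ rᵢ sin(∑_{k<i} x_k)) with indices mod n, n ≥ 5. At the point (x*, r*) = (2π/n, …, 2π/n, 1, …, 1), the derivative DQ(x*, r*) : ℝ^{2n} → ℝ⁴ is surjective; hence Q⁻¹(0) is a (2n−4)-dimensional C^∞ submanifold of ℝ^{2n} in a neighborhood of (x*, r*). -/

import Mathlib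

open Real Finset

/-- The constraint map defining the polygonal manifold `M(n, α)`: angles sum to `2π`,
area equals that of the regular `n`-gon inscribed in the unit circle, and the
barycenter of the vertices is the origin. -/
noncomputable def Qmap (n : ℕ) [NeZero n] (p : (Fin n → ℝ) × (Fin n → ℝ)) : Fin 4 → ℝ :=
  ![∑ i, p.1 i - 2 * π,
    ∑ i, p.2 i * p.2 (i + 1) * Real.sin (p.1 i) - n * Real.sin (2 * π / n),
    ∑ i, p.2 i * Real.cos (∑ k ∈ Finset.univ.filter (fun k : Fin n => (k : ℕ) < (i : ℕ)), p.1 k),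
    ∑ i, p.2 i * Real.sin (∑ k ∈ Finset.univ.filter (fun k : Fin n => (k : ℕ) < (i : ℕ)), p.1 k)]

lemma card_filter_lt_fin (n : ℕ) (i : Fin n) :
    (Finset.univ.filter fun k : Fin n => k < i).card = (i:ℕ) := by
  rw [show (univ.filter fun k : Fin n => k < i) = Finset.Iio i by ext; simp, Fin.card_Iio]

lemma qdiff (n : ℕ) [NeZero n] : Differentiable ℝ (Qmap n) := by
  unfold Qmap
  rw [differentiable_pi]
  intro j
  fin_cases j <;> simp <;> fun_prop

lemma fderiv_apply_line (n : ℕ) [NeZero n] (p₀ v : (Fin n → ℝ) × (Fin n → ℝ))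
    (j : Fin 4) (d : ℝ)
    (h : HasDerivAt (fun t : ℝ => Qmap n (p₀ + t • v) j) d 0) :
    fderiv ℝ (Qmap n) p₀ v j = d := by
  have hc : HasDerivAt (fun t : ℝ => p₀ + t • v) v 0 := by
    simpa using ((hasDerivAt_id (0:ℝ)).smul_const v).const_add p₀
  have h1 : HasDerivAt (fun t : ℝ => Qmap n (p₀ + t • v)) (fderiv ℝ (Qmap n) p₀ v) 0 := by
    have h0 : p₀ + (0:ℝ) • v = p₀ := by simp
    have h2 := ((qdiff n) (p₀ + (0:ℝ) • v)).hasFDerivAt.comp_hasDerivAt 0 hc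
    rw [h0] at h2
    exact h2
  exact (hasDerivAt_pi.mp h1 j).unique h

lemma fderiv_r (n : ℕ) [NeZero n] (w : Fin n → ℝ) (j : Fin 4) :
    fderiv ℝ (Qmap n) ((fun _ => 2 * π / n, fun _ => 1) : (Fin n → ℝ) × (Fin n → ℝ))
        ((0, w) : (Fin n → ℝ) × (Fin n → ℝ)) j =
      ![0, (∑ i, (w i + w (i + 1))) * Real.sin (2 * π / n),
        ∑ i, w i * Real.cos ((i : ℕ) * (2 * π / n)),
        ∑ i, w i * Real.sin ((i : ℕ) * (2 * π / n))] j := by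
  apply fderiv_apply_line
  fin_cases j
  · -- j = 0 : constant
    show HasDerivAt (fun t : ℝ => Qmap n
        (((fun _ => 2 * π / n, fun _ => 1) : (Fin n → ℝ) × (Fin n → ℝ)) + t • (0, w)) 0) 0 0
    have hfun : (fun t : ℝ => Qmap n
        (((fun _ => 2 * π / n, fun _ => 1) : (Fin n → ℝ) × (Fin n → ℝ)) + t • (0, w)) 0)
        = fun _ : ℝ => (n : ℝ) * (2 * π / n) - 2 * π := by
      funext t
      simp [Qmap, Finset.sum_const, nsmul_eq_mul]
    rw [hfun]
    simpa using hasDerivAt_const (0:ℝ) ((n : ℝ) * (2 * π / n) - 2 * π)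
  · -- j = 1
    show HasDerivAt (fun t : ℝ => Qmap n
        (((fun _ => 2 * π / n, fun _ => 1) : (Fin n → ℝ) × (Fin n → ℝ)) + t • (0, w)) 1)
      ((∑ i : Fin n, (w i + w (i + 1))) * Real.sin (2 * π / n)) 0
    have hfun : (fun t : ℝ => Qmap n
        (((fun _ => 2 * π / n, fun _ => 1) : (Fin n → ℝ) × (Fin n → ℝ)) + t • (0, w)) 1)
        = fun t : ℝ => ∑ i : Fin n, (1 + t * w i) * (1 + t * w (i + 1)) * Real.sin (2 * π / n)
            - (n : ℝ) * Real.sin (2 * π / n) := by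
      funext t
      simp [Qmap]
    rw [hfun]
    have h1 : HasDerivAt (fun t : ℝ => ∑ i : Fin n,
        (1 + t * w i) * (1 + t * w (i + 1)) * Real.sin (2 * π / n))
        (∑ i : Fin n, (w i + w (i + 1)) * Real.sin (2 * π / n)) 0 := by
      have := HasDerivAt.fun_sum (fun i (_ : i ∈ Finset.univ) =>
        ((((hasDerivAt_id (0:ℝ)).const_mul (w i)).const_add 1).mul
          (((hasDerivAt_id (0:ℝ)).const_mul (w (i+1))).const_add 1)).mul_const
            (Real.sin (2 * π / n)))
      convert this using 1
      · rfl
      · rfl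
      · funext t; apply Finset.sum_congr rfl; intro i _; simp only [id_eq, Pi.mul_apply]; ring
      · apply Finset.sum_congr rfl; intro i _; simp only [id_eq]; ring
    simpa [Finset.sum_mul] using h1.sub_const ((n : ℝ) * Real.sin (2 * π / n))
  · -- j = 2
    show HasDerivAt (fun t : ℝ => Qmap n
        (((fun _ => 2 * π / n, fun _ => 1) : (Fin n → ℝ) × (Fin n → ℝ)) + t • (0, w)) 2)
      (∑ i : Fin n, w i * Real.cos ((i : ℕ) * (2 * π / n))) 0
    have hfun : (fun t : ℝ => Qmap n
        (((fun _ => 2 * π / n, fun _ => 1) : (Fin n → ℝ) × (Fin n → ℝ)) + t • (0, w)) 2)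
        = fun t : ℝ => ∑ i : Fin n, (1 + t * w i) * Real.cos ((i : ℕ) * (2 * π / n)) := by
      funext t
      simp [Qmap, Finset.sum_const, card_filter_lt_fin, nsmul_eq_mul]
    rw [hfun]
    have h1 := HasDerivAt.fun_sum (fun (i : Fin n) (_ : i ∈ Finset.univ) =>
      (((hasDerivAt_id (0:ℝ)).const_mul (w i)).const_add 1).mul_const
        (Real.cos ((i : ℕ) * (2 * π / n))))
    convert h1 using 1
    · rfl
    · rfl
    · funext y; apply Finset.sum_congr rfl; intro i _; simp only [id_eq]; ring
    · apply Finset.sum_congr rfl; intro i _; ring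
  · -- j = 3
    show HasDerivAt (fun t : ℝ => Qmap n
        (((fun _ => 2 * π / n, fun _ => 1) : (Fin n → ℝ) × (Fin n → ℝ)) + t • (0, w)) 3)
      (∑ i : Fin n, w i * Real.sin ((i : ℕ) * (2 * π / n))) 0
    have hfun : (fun t : ℝ => Qmap n
        (((fun _ => 2 * π / n, fun _ => 1) : (Fin n → ℝ) × (Fin n → ℝ)) + t • (0, w)) 3)
        = fun t : ℝ => ∑ i : Fin n, (1 + t * w i) * Real.sin ((i : ℕ) * (2 * π / n)) := by
      funext t
      simp [Qmap, Finset.sum_const, card_filter_lt_fin, nsmul_eq_mul]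
    rw [hfun]
    have h1 := HasDerivAt.fun_sum (fun (i : Fin n) (_ : i ∈ Finset.univ) =>
      (((hasDerivAt_id (0:ℝ)).const_mul (w i)).const_add 1).mul_const
        (Real.sin ((i : ℕ) * (2 * π / n))))
    convert h1 using 1
    · rfl
    · rfl
    · funext y; apply Finset.sum_congr rfl; intro i _; simp only [id_eq]; ring
    · apply Finset.sum_congr rfl; intro i _; ring

lemma fderiv_x0 (n : ℕ) [NeZero n] :
    fderiv ℝ (Qmap n) ((fun _ => 2 * π / n, fun _ => 1) : (Fin n → ℝ) × (Fin n → ℝ))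
      ((fun _ => 1, 0) : (Fin n → ℝ) × (Fin n → ℝ)) 0 = n := by
  apply fderiv_apply_line
  have hfun : (fun t : ℝ => Qmap n
      (((fun _ => 2 * π / n, fun _ => 1) : (Fin n → ℝ) × (Fin n → ℝ)) + t • ((fun _ => 1 : Fin n → ℝ), 0)) 0)
      = fun t : ℝ => (n : ℝ) * (2 * π / n + t) - 2 * π := by
    funext t
    simp [Qmap, Finset.sum_const, nsmul_eq_mul, mul_add]
  rw [hfun]
  simpa using (((hasDerivAt_id (0:ℝ)).const_add (2 * π / n)).const_mul (n:ℝ)).sub_const (2 * π)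

lemma sum_shift (n : ℕ) [NeZero n] (w : Fin n → ℝ) : ∑ i : Fin n, w (i + 1) = ∑ i : Fin n, w i :=
  Fintype.sum_equiv (Equiv.addRight 1) _ _ (fun _ => rfl)

section trig
open Complex in
lemma sum_exp_zero (n m : ℕ) (hm1 : 1 ≤ m) (hm : m < n) :
    ∑ i ∈ Finset.range n, Complex.exp ((2 * π * m * i / n : ℝ) * Complex.I) = 0 := by
  have hn' : 0 < n := lt_of_le_of_lt (Nat.zero_le m) hm
  have hn : (0:ℝ) < n := by exact_mod_cast hn'
  have hnc : (n:ℂ) ≠ 0 := by exact_mod_cast hn'.ne'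
  have hne : Complex.exp ((2 * π * m / n : ℝ) * Complex.I) ≠ 1 := by
    intro h
    rw [Complex.exp_eq_one_iff] at h
    obtain ⟨k, hk⟩ := h
    have hI : (Complex.I : ℂ) ≠ 0 := Complex.I_ne_zero
    have hπc : (π : ℂ) ≠ 0 := by exact_mod_cast Real.pi_ne_zero
    have h3 : 2 * (π:ℂ) * m * I = k * (2 * π * I) * n := by
      push_cast at hk
      field_simp at hk
      linear_combination (2 * (π:ℂ) * I) * hk
    have h4 : (m : ℂ) = k * n := by
      have h5 := mul_right_cancel₀ hI (by linear_combination h3 :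
        (2 * (π:ℂ) * m) * I = (k * (2 * π) * n) * I)
      have h6 : (2*(π:ℂ)) * m = (2*π) * (k*n) := by linear_combination h5
      exact mul_left_cancel₀ (mul_ne_zero two_ne_zero hπc) h6
    have h6 : (m : ℤ) = k * n := by exact_mod_cast h4
    rcases le_or_gt k 0 with hk0 | hk0
    · nlinarith [h6, (by exact_mod_cast hm1 : (1:ℤ) ≤ m), (by exact_mod_cast hn' : (0:ℤ) < n)]
    · have : (1:ℤ) ≤ k := hk0
      nlinarith [h6, (by exact_mod_cast hm : (m:ℤ) < n)]
  have key : ∀ i : ℕ, Complex.exp ((2 * π * m * i / n : ℝ) * Complex.I)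
      = (Complex.exp ((2 * π * m / n : ℝ) * Complex.I)) ^ i := by
    intro i
    rw [← Complex.exp_nat_mul]
    congr 1
    push_cast
    ring
  simp_rw [key]
  rw [geom_sum_eq hne]
  have hpow : (Complex.exp ((2 * π * m / n : ℝ) * Complex.I)) ^ n = 1 := by
    rw [← Complex.exp_nat_mul]
    have : (n : ℂ) * (((2 * π * m / n : ℝ) : ℂ) * Complex.I) = (m : ℤ) * (2 * π * Complex.I) := by
      push_cast
      field_simp
    rw [this, Complex.exp_int_mul_two_pi_mul_I]
  rw [hpow, sub_self, zero_div]

lemma sum_cos_zero (n m : ℕ) (hm1 : 1 ≤ m) (hm : m < n) :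
    ∑ i ∈ Finset.range n, Real.cos (2 * π * m * i / n) = 0 := by
  have h := congrArg Complex.re (sum_exp_zero n m hm1 hm)
  rw [Complex.re_sum] at h
  simp only [Complex.exp_ofReal_mul_I_re] at h
  exact h

lemma sum_sin_zero (n m : ℕ) (hm1 : 1 ≤ m) (hm : m < n) :
    ∑ i ∈ Finset.range n, Real.sin (2 * π * m * i / n) = 0 := by
  have h := congrArg Complex.im (sum_exp_zero n m hm1 hm)
  rw [Complex.im_sum] at h
  simp only [Complex.exp_ofReal_mul_I_im] at h
  exact h

lemma finsum_cos (n : ℕ) [NeZero n] (hn : 1 < n) :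
    ∑ i : Fin n, Real.cos ((i : ℕ) * (2 * π / n)) = 0 := by
  rw [Fin.sum_univ_eq_sum_range (fun m : ℕ => Real.cos (m * (2 * π / n)))]
  have h := sum_cos_zero n 1 le_rfl hn
  rw [← h]
  refine Finset.sum_congr rfl fun i _ => ?_
  congr 1
  push_cast
  ring

lemma finsum_sin (n : ℕ) [NeZero n] (hn : 1 < n) :
    ∑ i : Fin n, Real.sin ((i : ℕ) * (2 * π / n)) = 0 := by
  rw [Fin.sum_univ_eq_sum_range (fun m : ℕ => Real.sin (m * (2 * π / n)))]
  have h := sum_sin_zero n 1 le_rfl hn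
  rw [← h]
  refine Finset.sum_congr rfl fun i _ => ?_
  congr 1
  push_cast
  ring

lemma finsum_cos2 (n : ℕ) [NeZero n] (hn : 2 < n) :
    ∑ i : Fin n, Real.cos ((i : ℕ) * (2 * π / n)) * Real.cos ((i : ℕ) * (2 * π / n)) = n / 2 := by
  have key : ∀ i : Fin n, Real.cos ((i : ℕ) * (2 * π / n)) * Real.cos ((i : ℕ) * (2 * π / n))
      = 1 / 2 + Real.cos (2 * ((i : ℕ) * (2 * π / n))) / 2 := by
    intro i
    have := Real.cos_sq ((i : ℕ) * (2 * π / n))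
    rw [sq] at this
    linarith
  simp_rw [key]
  rw [Finset.sum_add_distrib, Finset.sum_const, Finset.card_univ, Fintype.card_fin]
  have h2 : ∑ i : Fin n, Real.cos (2 * ((i : ℕ) * (2 * π / n))) = 0 := by
    rw [Fin.sum_univ_eq_sum_range (fun m : ℕ => Real.cos (2 * (m * (2 * π / n))))]
    have h := sum_cos_zero n 2 (by omega) hn
    rw [← h]
    refine Finset.sum_congr rfl fun i _ => ?_
    congr 1
    push_cast
    ring
  have h3 : ∑ i : Fin n, Real.cos (2 * ((i : ℕ) * (2 * π / n))) / 2 = 0 := by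
    rw [← Finset.sum_div, h2, zero_div]
  rw [h3, nsmul_eq_mul]
  ring

lemma finsum_sin2 (n : ℕ) [NeZero n] (hn : 2 < n) :
    ∑ i : Fin n, Real.sin ((i : ℕ) * (2 * π / n)) * Real.sin ((i : ℕ) * (2 * π / n)) = n / 2 := by
  have key : ∀ i : Fin n, Real.sin ((i : ℕ) * (2 * π / n)) * Real.sin ((i : ℕ) * (2 * π / n))
      = 1 - Real.cos ((i : ℕ) * (2 * π / n)) * Real.cos ((i : ℕ) * (2 * π / n)) := by
    intro i
    have := Real.sin_sq_add_cos_sq ((i : ℕ) * (2 * π / n))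
    rw [sq, sq] at this
    linarith
  simp_rw [key]
  rw [Finset.sum_sub_distrib, Finset.sum_const, Finset.card_univ, Fintype.card_fin, finsum_cos2 n hn, nsmul_eq_mul]
  ring

lemma finsum_sincos (n : ℕ) [NeZero n] (hn : 2 < n) :
    ∑ i : Fin n, Real.sin ((i : ℕ) * (2 * π / n)) * Real.cos ((i : ℕ) * (2 * π / n)) = 0 := by
  have key : ∀ i : Fin n, Real.sin ((i : ℕ) * (2 * π / n)) * Real.cos ((i : ℕ) * (2 * π / n))
      = Real.sin (2 * ((i : ℕ) * (2 * π / n))) / 2 := by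
    intro i
    have := Real.sin_two_mul ((i : ℕ) * (2 * π / n))
    linarith
  simp_rw [key]
  rw [← Finset.sum_div]
  have h2 : ∑ i : Fin n, Real.sin (2 * ((i : ℕ) * (2 * π / n))) = 0 := by
    rw [Fin.sum_univ_eq_sum_range (fun m : ℕ => Real.sin (2 * (m * (2 * π / n))))]
    have h := sum_sin_zero n 2 (by omega) hn
    rw [← h]
    refine Finset.sum_congr rfl fun i _ => ?_
    congr 1
    push_cast
    ring
  rw [h2, zero_div]

end trig

theorem Qmap_deriv_surjective (n : ℕ) [NeZero n] (hn : 5 ≤ n) :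
    Function.Surjective
        (fderiv ℝ (Qmap n) ((fun _ => 2 * π / n, fun _ => 1) : (Fin n → ℝ) × (Fin n → ℝ))) ∧
    Module.finrank ℝ
        (LinearMap.ker
          (fderiv ℝ (Qmap n)
            ((fun _ => 2 * π / n, fun _ => 1) : (Fin n → ℝ) × (Fin n → ℝ))).toLinearMap)
      = 2 * n - 4 := by
  have hn1 : 1 < n := by omega
  have hn2 : 2 < n := by omega
  have hn0 : (n : ℝ) ≠ 0 := by positivity
  have hnR : (5 : ℝ) ≤ n := by exact_mod_cast hn
  have hs : Real.sin (2 * π / n) ≠ 0 := by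
    have h1 : 0 < 2 * π / n := by positivity
    have h2 : 2 * π / n < π := by
      rw [div_lt_iff₀ (by positivity)]
      nlinarith [Real.pi_pos]
    exact (Real.sin_pos_of_pos_of_lt_pi h1 h2).ne'
  set L := fderiv ℝ (Qmap n) ((fun _ => 2 * π / n, fun _ => 1) : (Fin n → ℝ) × (Fin n → ℝ))
    with hL
  set w1 : Fin n → ℝ := fun _ => 1 with hw1
  set wc : Fin n → ℝ := fun i => Real.cos ((i : ℕ) * (2 * π / n)) with hwc
  set ws : Fin n → ℝ := fun i => Real.sin ((i : ℕ) * (2 * π / n)) with hws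
  have h10 : L (0, w1) 0 = 0 := by rw [fderiv_r]; rfl
  have h11 : L (0, w1) 1 = 2 * n * Real.sin (2 * π / n) := by
    rw [fderiv_r]
    show (∑ _i : Fin n, ((1:ℝ) + 1)) * Real.sin (2 * π / n) = _
    rw [Finset.sum_const, Finset.card_univ, Fintype.card_fin, nsmul_eq_mul]
    ring
  have h12 : L (0, w1) 2 = 0 := by
    rw [fderiv_r]
    show ∑ i : Fin n, 1 * Real.cos ((i : ℕ) * (2 * π / n)) = 0
    simp only [one_mul]
    exact finsum_cos n hn1
  have h13 : L (0, w1) 3 = 0 := by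
    rw [fderiv_r]
    show ∑ i : Fin n, 1 * Real.sin ((i : ℕ) * (2 * π / n)) = 0
    simp only [one_mul]
    exact finsum_sin n hn1
  have h20 : L (0, wc) 0 = 0 := by rw [fderiv_r]; rfl
  have h21 : L (0, wc) 1 = 0 := by
    rw [fderiv_r]
    show (∑ i : Fin n, (wc i + wc (i + 1))) * Real.sin (2 * π / n) = 0
    rw [Finset.sum_add_distrib, sum_shift, hwc, finsum_cos n hn1]
    ring
  have h22 : L (0, wc) 2 = n / 2 := by
    rw [fderiv_r]
    exact finsum_cos2 n hn2
  have h23 : L (0, wc) 3 = 0 := by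
    rw [fderiv_r]
    show ∑ i : Fin n, wc i * Real.sin ((i : ℕ) * (2 * π / n)) = 0
    rw [← finsum_sincos n hn2]
    exact Finset.sum_congr rfl fun i _ => mul_comm _ _
  have h30 : L (0, ws) 0 = 0 := by rw [fderiv_r]; rfl
  have h31 : L (0, ws) 1 = 0 := by
    rw [fderiv_r]
    show (∑ i : Fin n, (ws i + ws (i + 1))) * Real.sin (2 * π / n) = 0
    rw [Finset.sum_add_distrib, sum_shift, hws, finsum_sin n hn1]
    ring
  have h32 : L (0, ws) 2 = 0 := by
    rw [fderiv_r]
    exact finsum_sincos n hn2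
  have h33 : L (0, ws) 3 = n / 2 := by
    rw [fderiv_r]
    exact finsum_sin2 n hn2
  have h40 : L ((fun _ => 1 : Fin n → ℝ), 0) 0 = n := fderiv_x0 n
  have hsurj : Function.Surjective L := by
    intro y
    set a1 := L ((fun _ => 1 : Fin n → ℝ), 0) 1 with ha1
    set a2 := L ((fun _ => 1 : Fin n → ℝ), 0) 2 with ha2
    set a3 := L ((fun _ => 1 : Fin n → ℝ), 0) 3 with ha3
    set c4 := y 0 / n with hc4
    set c1 := (y 1 - c4 * a1) / (2 * n * Real.sin (2 * π / n)) with hc1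
    set c2 := (y 2 - c4 * a2) / ((n : ℝ) / 2) with hc2
    set c3 := (y 3 - c4 * a3) / ((n : ℝ) / 2) with hc3
    refine ⟨c1 • ((0 : Fin n → ℝ), w1) + c2 • ((0 : Fin n → ℝ), wc)
      + c3 • ((0 : Fin n → ℝ), ws) + c4 • ((fun _ => 1 : Fin n → ℝ), (0 : Fin n → ℝ)), ?_⟩
    rw [map_add, map_add, map_add, map_smul, map_smul, map_smul, map_smul]
    funext j
    fin_cases j
    · show c1 * L (0, w1) 0 + c2 * L (0, wc) 0 + c3 * L (0, ws) 0
        + c4 * L ((fun _ => 1 : Fin n → ℝ), 0) 0 = y 0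
      rw [h10, h20, h30, h40, hc4]
      field_simp
      ring
    · show c1 * L (0, w1) 1 + c2 * L (0, wc) 1 + c3 * L (0, ws) 1
        + c4 * L ((fun _ => 1 : Fin n → ℝ), 0) 1 = y 1
      rw [h11, h21, h31, ← ha1, hc1]
      field_simp
      ring
    · show c1 * L (0, w1) 2 + c2 * L (0, wc) 2 + c3 * L (0, ws) 2
        + c4 * L ((fun _ => 1 : Fin n → ℝ), 0) 2 = y 2
      rw [h12, h22, h32, ← ha2, hc2]
      field_simp
      ring
    · show c1 * L (0, w1) 3 + c2 * L (0, wc) 3 + c3 * L (0, ws) 3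
        + c4 * L ((fun _ => 1 : Fin n → ℝ), 0) 3 = y 3
      rw [h13, h23, h33, ← ha3, hc3]
      field_simp
      ring
  refine ⟨hsurj, ?_⟩
  have hrange : LinearMap.range (L.toLinearMap) = ⊤ := LinearMap.range_eq_top.mpr hsurj
  have hrank := LinearMap.finrank_range_add_finrank_ker (L.toLinearMap)
  rw [hrange, finrank_top] at hrank
  have hdom : Module.finrank ℝ ((Fin n → ℝ) × (Fin n → ℝ)) = n + n := by
    simp [Module.finrank_prod]
  have hcod : Module.finrank ℝ (Fin 4 → ℝ) = 4 := by simp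
  rw [hdom, hcod] at hrank
  omega
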